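/- If the pair of smooth real functions (a, b) on an interval I solves the system a′(t) = −(k²b⁶ + a²(−Λb² + (b′)²))/(2abb′) and Λ·a²b²(3kb³ + ab′) = 3(kb³ + ab′)³ with a(t₀)=b(t₀)=1, then the functions ã(t) = a(2t₀−t), b̃(t) = b(2t₀−t) solve a′(t) = −(k²b⁶ + a²(Λ̃b² + (b′)²))/(2abb′) and Λ̃·a²b²(−3kb³ + ab′) = 3(kb³ − ab′)³ with Λ̃ = −Λ and ã(t₀)=b̃(t₀)=1, on the reflected interval {t : 2t₀−t ∈ I}. -/

import Mathlib

lemma deriv_reflect (f : ℝ → ℝ) (t₀ t : ℝ) (hf : DifferentiableAt ℝ f (2*t₀ - t)) :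
    deriv (fun s => f (2*t₀ - s)) t = -(deriv f (2*t₀ - t)) := by
  have h : HasDerivAt (fun s : ℝ => 2*t₀ - s) (-1) t := by
    simpa using (hasDerivAt_id' t).const_sub (2*t₀)
  have := (hf.hasDerivAt.comp t h).deriv
  simpa [mul_comm, Function.comp_def] using this

theorem stmt15 (k Λ t₀ : ℝ) (hk : 0 < k) (I : Set ℝ) (ht₀ : t₀ ∈ I)
    (a b : ℝ → ℝ)
    (hdiff : ∀ t ∈ I, DifferentiableAt ℝ a t ∧ DifferentiableAt ℝ b t)
    (heq1 : ∀ t ∈ I, 2 * a t * b t * deriv b t * deriv a t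
      = -(k^2 * (b t)^6 + (a t)^2 * (-Λ * (b t)^2 + (deriv b t)^2)))
    (heq2 : ∀ t ∈ I, Λ * (a t)^2 * (b t)^2 * (3*k * (b t)^3 + a t * deriv b t)
      = 3 * (k * (b t)^3 + a t * deriv b t)^3)
    (ha0 : a t₀ = 1) (hb0 : b t₀ = 1) :
    (fun t => a (2*t₀ - t)) t₀ = 1 ∧ (fun t => b (2*t₀ - t)) t₀ = 1 ∧
    ∀ t, 2*t₀ - t ∈ I →
      (2 * a (2*t₀ - t) * b (2*t₀ - t) * deriv (fun s => b (2*t₀ - s)) t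
          * deriv (fun s => a (2*t₀ - s)) t
        = -(k^2 * (b (2*t₀ - t))^6 + (a (2*t₀ - t))^2
            * ((-Λ) * (b (2*t₀ - t))^2 + (deriv (fun s => b (2*t₀ - s)) t)^2))) ∧
      ((-Λ) * (a (2*t₀ - t))^2 * (b (2*t₀ - t))^2
          * (-(3*k) * (b (2*t₀ - t))^3 + a (2*t₀ - t) * deriv (fun s => b (2*t₀ - s)) t)
        = 3 * (k * (b (2*t₀ - t))^3
            - a (2*t₀ - t) * deriv (fun s => b (2*t₀ - s)) t)^3) := by
  have h2 : 2*t₀ - t₀ = t₀ := by ring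
  refine ⟨by simp only [h2, ha0], by simp only [h2, hb0], fun t ht => ?_⟩
  obtain ⟨hda, hdb⟩ := hdiff _ ht
  rw [deriv_reflect a t₀ t hda, deriv_reflect b t₀ t hdb]
  constructor
  · have := heq1 _ ht; nlinarith [this]
  · have := heq2 _ ht; nlinarith [this]
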